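/- Let v ≡ 0 (mod 12). If K_v admits a uniformly resolvable decomposition into r perfect matchings, s parallel classes of P_3, and t parallel classes of P_4, then there exist non-negative integers x, y with s = 3x, t = 2y, r = v - 1 - 4x - 3y, 0 ≤ x ≤ (v-4)/4, and 0 ≤ y ≤ r(v,x), where r(v,x) = (v-3)/3 - 4x/3 if x ≡ 0 (mod 3), (v-6)/3 - 4(x-1)/3 if x ≡ 1 (mod 3), (v-9)/3 - 4(x-2)/3 if x ≡ 2 (mod 3). -/

import Mathlib

/-- The edges of a path given by the list of its vertices in order. -/
def pathEdges {V : Type*} [DecidableEq V] (l : List V) : Finset (Sym2 V) :=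
  ((l.zip l.tail).map (fun p : V × V => Sym2.mk p.1 p.2)).toFinset

/-- A parallel class of paths on `k` vertices in a graph `G`: a set of lists, each
a path on `k` vertices of `G`, which are vertex-disjoint and cover every vertex. -/
def IsPathClass {V : Type*} (G : SimpleGraph V) (k : ℕ) (C : Finset (List V)) : Prop :=
  (∀ l ∈ C, l.length = k ∧ l.Nodup ∧ l.Chain' G.Adj) ∧
  ∀ x : V, ∃! l : List V, l ∈ C ∧ x ∈ l

/-- All edges used by a class of paths. -/
def classEdges {V : Type*} [DecidableEq V] (C : Finset (List V)) : Finset (Sym2 V) :=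
  C.biUnion pathEdges

/-- A uniformly resolvable `(P₂,P₃,P₄)`-decomposition of `G` into `r` perfect matchings
(parallel classes of `P₂`), `s` parallel classes of `P₃` and `t` parallel classes of `P₄`:
pairwise edge-disjoint classes whose edges together are exactly the edges of `G`. -/
def IsURD {V : Type*} [DecidableEq V] (G : SimpleGraph V) (r s t : ℕ) : Prop :=
  ∃ F : Fin r ⊕ Fin s ⊕ Fin t → Finset (List V),
    (∀ i, IsPathClass G (Sum.elim (fun _ => 2) (Sum.elim (fun _ => 3) (fun _ => 4)) i) (F i)) ∧
    (∀ i j, i ≠ j → Disjoint (classEdges (F i)) (classEdges (F j))) ∧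
    (∀ e, e ∈ G.edgeSet ↔ ∃ i, e ∈ classEdges (F i))

/-- The function `r(v, u)` from Table 1 of the paper. -/
def rD (v u : ℕ) : ℕ :=
  if u % 3 = 0 then (v - 3) / 3 - 4 * u / 3
  else if u % 3 = 1 then (v - 6) / 3 - 4 * (u - 1) / 3
  else (v - 9) / 3 - 4 * (u - 2) / 3

/-- `D_i(v) = { (v - 1 - 4i - 3y, 3i, 2y) : 0 ≤ y ≤ r(v, i) }`. -/
def DJ (v i : ℕ) : Set (ℕ × ℕ × ℕ) :=
  { p | ∃ y ≤ rD v i, p = (v - 1 - 4 * i - 3 * y, 3 * i, 2 * y) }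

/-- For `v ≡ 0 (mod 12)`: if `K_v` has a uniformly resolvable decomposition into `r`
perfect matchings, `s` classes of `P₃` and `t` classes of `P₄`, then `s = 3x`, `t = 2y`,
`r = v - 1 - 4x - 3y` with `0 ≤ x ≤ (v-4)/4` and `0 ≤ y ≤ r(v,x)`; that is,
`(r,s,t) ∈ D(v)`. -/
lemma mem_of_mem_pathEdges {V : Type*} [DecidableEq V] {l : List V} {e : Sym2 V}
    (he : e ∈ pathEdges l) : ∀ x ∈ e, x ∈ l := by
  simp only [pathEdges, List.mem_toFinset, List.mem_map] at he
  obtain ⟨⟨a, b⟩, hab, rfl⟩ := he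
  have := List.of_mem_zip hab
  intro x hx
  rcases Sym2.mem_iff.mp hx with rfl | rfl
  · exact this.1
  · exact List.mem_of_mem_tail this.2

lemma pathEdges_card {V : Type*} [DecidableEq V] :
    ∀ (l : List V), l.Nodup → (pathEdges l).card = l.length - 1
  | [] => by simp [pathEdges]
  | [a] => by simp [pathEdges]
  | a :: b :: tl => fun h => by
    have h1 : pathEdges (a :: b :: tl) = insert (Sym2.mk a b) (pathEdges (b :: tl)) := by
      simp [pathEdges]
    have hnot : Sym2.mk a b ∉ pathEdges (b :: tl) := by
      intro hc
      have := mem_of_mem_pathEdges hc a (by simp)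
      simp_all
    rw [h1, Finset.card_insert_of_notMem hnot, pathEdges_card (b :: tl) h.of_cons]
    simp

lemma class_vertex_disj {V : Type*} {G : SimpleGraph V} {k : ℕ} {C : Finset (List V)}
    (hC : IsPathClass G k C) {l l' : List V} (hl : l ∈ C) (hl' : l' ∈ C) (hne : l ≠ l')
    {x : V} (hx : x ∈ l) : x ∉ l' := by
  intro hx'
  obtain ⟨m, _, hm⟩ := hC.2 x
  exact hne ((hm l ⟨hl, hx⟩).trans (hm l' ⟨hl', hx'⟩).symm)

lemma class_card_mul {V : Type*} [Fintype V] [DecidableEq V] {G : SimpleGraph V} {k : ℕ}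
    {C : Finset (List V)} (hC : IsPathClass G k C) : C.card * k = Fintype.card V := by
  have huniv : (Finset.univ : Finset V) = C.biUnion (fun l => l.toFinset) := by
    ext x
    simp only [Finset.mem_univ, Finset.mem_biUnion, List.mem_toFinset, true_iff]
    obtain ⟨m, hm, _⟩ := hC.2 x
    exact ⟨m, hm.1, hm.2⟩
  have hdisj : ∀ l ∈ C, ∀ l' ∈ C, l ≠ l' → Disjoint l.toFinset l'.toFinset := by
    intro l hl l' hl' hne
    rw [Finset.disjoint_left]
    intro x hx
    simp only [List.mem_toFinset] at *
    exact class_vertex_disj hC hl hl' hne hx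
  rw [← Finset.card_univ, huniv, Finset.card_biUnion hdisj]
  rw [Finset.sum_congr rfl (fun l hl => by
    rw [List.toFinset_card_of_nodup (hC.1 l hl).2.1, (hC.1 l hl).1])]
  simp [mul_comm]

lemma classEdges_card {V : Type*} [DecidableEq V] {G : SimpleGraph V} {k : ℕ}
    {C : Finset (List V)} (hC : IsPathClass G k C) :
    (classEdges C).card = C.card * (k - 1) := by
  have hdisj : ∀ l ∈ C, ∀ l' ∈ C, l ≠ l' → Disjoint (pathEdges l) (pathEdges l') := by
    intro l hl l' hl' hne
    rw [Finset.disjoint_left]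
    intro e he he'
    obtain ⟨a, b⟩ := e
    exact class_vertex_disj hC hl hl' hne (mem_of_mem_pathEdges he a (by simp))
      (mem_of_mem_pathEdges he' a (by simp))
  rw [classEdges, Finset.card_biUnion hdisj]
  rw [Finset.sum_congr rfl (fun l hl => by
    rw [pathEdges_card l (hC.1 l hl).2.1, (hC.1 l hl).1])]
  simp [mul_comm]


theorem stmt19 (v r s t : ℕ) (hv : 0 < v) (h12 : v % 12 = 0)
    (h : IsURD (⊤ : SimpleGraph (Fin v)) r s t) :
    ∃ x y : ℕ, s = 3 * x ∧ t = 2 * y ∧ r = v - 1 - 4 * x - 3 * y ∧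
      x ≤ (v - 4) / 4 ∧ y ≤ rD v x := by
  obtain ⟨F, hF, hdisj, hcov⟩ := h
  have hEfin : (⊤ : SimpleGraph (Fin v)).edgeFinset
      = Finset.univ.biUnion (fun i => classEdges (F i)) := by
    ext e
    simp only [SimpleGraph.mem_edgeFinset, Finset.mem_biUnion, Finset.mem_univ, true_and]
    exact hcov e
  have hcard : (⊤ : SimpleGraph (Fin v)).edgeFinset.card = ∑ i, (classEdges (F i)).card := by
    rw [hEfin, Finset.card_biUnion (fun i _ j _ hij => hdisj i j hij)]
  have h2 : ∀ i : Fin r, 12 * (classEdges (F (Sum.inl i))).card = 6 * v := by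
    intro i
    have hc := classEdges_card (hF (Sum.inl i))
    have hm := class_card_mul (hF (Sum.inl i))
    simp only [Sum.elim_inl, Fintype.card_fin] at hc hm
    omega
  have h3 : ∀ i : Fin s, 12 * (classEdges (F (Sum.inr (Sum.inl i)))).card = 8 * v := by
    intro i
    have hc := classEdges_card (hF (Sum.inr (Sum.inl i)))
    have hm := class_card_mul (hF (Sum.inr (Sum.inl i)))
    simp only [Sum.elim_inr, Sum.elim_inl, Fintype.card_fin] at hc hm
    omega
  have h4 : ∀ i : Fin t, 12 * (classEdges (F (Sum.inr (Sum.inr i)))).card = 9 * v := by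
    intro i
    have hc := classEdges_card (hF (Sum.inr (Sum.inr i)))
    have hm := class_card_mul (hF (Sum.inr (Sum.inr i)))
    simp only [Sum.elim_inr, Fintype.card_fin] at hc hm
    omega
  have hsum : 12 * ∑ i, (classEdges (F i)).card = r * (6 * v) + s * (8 * v) + t * (9 * v) := by
    rw [Finset.mul_sum, Fintype.sum_sum_type, Fintype.sum_sum_type]
    rw [Finset.sum_congr rfl (fun i _ => h2 i), Finset.sum_congr rfl (fun i _ => h3 i),
      Finset.sum_congr rfl (fun i _ => h4 i)]
    simp [add_assoc]
  have hchoose : (⊤ : SimpleGraph (Fin v)).edgeFinset.card = v.choose 2 := by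
    rw [SimpleGraph.card_edgeFinset_top_eq_card_choose_two, Fintype.card_fin]
  have hdvd : 2 ∣ v * (v - 1) := Dvd.dvd.mul_right ⟨v / 2, by omega⟩ (v - 1)
  have hch2 : 2 * (v * (v - 1) / 2) = v * (v - 1) := Nat.mul_div_cancel' hdvd
  have hkey : v * (6 * (v - 1)) = v * (6 * r + 8 * s + 9 * t) := by
    have := hsum
    rw [← hcard, hchoose, Nat.choose_two_right] at this
    nlinarith [hch2]
  have hmain : 6 * (v - 1) = 6 * r + 8 * s + 9 * t := Nat.eq_of_mul_eq_mul_left hv hkey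
  refine ⟨s / 3, t / 2, ?_, ?_, ?_, ?_, ?_⟩ <;> try omega
  unfold rD
  split_ifs <;> omega
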